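/- Let a_+ ≥ 2 and a_- ≥ 1 be integers and set g(y) = (y + k_+)^{a_+} (k_- − y)^{a_-} − κ·y. Then there exist positive reals k_+, k_-, κ with 2k_+ < k_- such that g has exactly three roots in the interval (0, k_-), each of multiplicity one. In particular it suffices to choose k_+, k_- with (k_- − k_+)/(k_- − 2k_+) < (3^{a_+}/2^{1+a_+})^{1/a_-} and 2k_+ < k_-, and then choose κ with 2^{a_+} k_+^{a_+−1}(k_- − k_+)^{a_-} < κ < (3^{a_+}/2)·k_+^{a_+−1}(k_- − 2k_+)^{a_-}. -/

import Mathlib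

open Polynomial

/-- The polynomial g(y) = (y + k₊)^{a₊} (k₋ − y)^{a₋} − κ·y. -/
noncomputable def gNine (ap am : ℕ) (kp km κ : ℝ) : ℝ[X] :=
  (X + C kp) ^ ap * (C km - X) ^ am - C κ * X

/-- `p` has exactly three roots in (0, km), each of multiplicity one. -/
def threeSimpleRoots (p : ℝ[X]) (km : ℝ) : Prop :=
  (p.roots.filter (fun y => 0 < y ∧ y < km)).card = 3 ∧
  ∀ y : ℝ, 0 < y → y < km → p.eval y = 0 → p.rootMultiplicity y = 1

section aux
open Multiset

lemma toFinset_interval_rolle (p : ℝ[X]) (a b : ℝ) :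
    ((p.roots.filter fun y => a < y ∧ y < b).toFinset).card ≤
      ((((derivative p).roots.filter fun y => a < y ∧ y < b).toFinset) \
        ((p.roots.filter fun y => a < y ∧ y < b).toFinset)).card + 1 := by
  rcases eq_or_ne (derivative p) 0 with hp' | hp'
  · rw [eq_C_of_derivative_eq_zero hp']
    simp
  have hp : p ≠ 0 := ne_of_apply_ne derivative (by rwa [derivative_zero])
  refine Finset.card_le_diff_of_interleaved fun x hx y hy hxy hxy' => ?_
  rw [Multiset.mem_toFinset, Multiset.mem_filter, mem_roots hp] at hx hy
  obtain ⟨z, hz1, hz2⟩ := exists_deriv_eq_zero hxy p.continuousOn (hx.1.trans hy.1.symm)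
  refine ⟨z, ?_, hz1.1, hz1.2⟩
  rw [Multiset.mem_toFinset, Multiset.mem_filter, mem_roots hp', IsRoot, ← p.deriv]
  exact ⟨hz2, hx.2.1.trans hz1.1, hz1.2.trans hy.2.2⟩

lemma card_interval_rolle (p : ℝ[X]) (a b : ℝ) :
    Multiset.card (p.roots.filter fun y => a < y ∧ y < b) ≤
      Multiset.card ((derivative p).roots.filter fun y => a < y ∧ y < b) + 1 := by
  classical
  set Q : ℝ → Prop := fun y => a < y ∧ y < b with hQ
  set rp := p.roots.filter Q with hrp
  set rd := (derivative p).roots.filter Q with hrd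
  have hcount : ∀ x ∈ rp.toFinset, Multiset.count x rd = rootMultiplicity x (derivative p) := by
    intro x hx
    rw [Multiset.mem_toFinset, hrp, Multiset.mem_filter] at hx
    rw [hrd, Multiset.count_filter, if_pos hx.2, count_roots]
  calc
    Multiset.card rp = ∑ x ∈ rp.toFinset, rp.count x := (Multiset.toFinset_sum_count_eq _).symm
    _ = ∑ x ∈ rp.toFinset, (rp.count x - 1 + 1) :=
      (Eq.symm <| Finset.sum_congr rfl fun _ hx => tsub_add_cancel_of_le <|
        Nat.succ_le_iff.2 <| Multiset.count_pos.2 <| Multiset.mem_toFinset.1 hx)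
    _ = (∑ x ∈ rp.toFinset, (rp.count x - 1)) + rp.toFinset.card := by
      simp only [Finset.sum_add_distrib, Finset.card_eq_sum_ones]
    _ ≤ (∑ x ∈ rp.toFinset, rd.count x) + ((rd.toFinset \ rp.toFinset).card + 1) := by
      refine add_le_add (Finset.sum_le_sum fun x hx => ?_) (toFinset_interval_rolle p a b)
      rw [hcount x hx, hrp, Multiset.count_filter]
      split
      · rw [count_roots]
        exact rootMultiplicity_sub_one_le_derivative_rootMultiplicity p x
      · simp
    _ ≤ (∑ x ∈ rp.toFinset, rd.count x) + ((∑ x ∈ rd.toFinset \ rp.toFinset, rd.count x) + 1) := by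
      refine add_le_add_right (add_le_add_left ((Finset.card_eq_sum_ones _).trans_le ?_) _) _
      refine Finset.sum_le_sum fun x hx => Nat.succ_le_iff.2 ?_
      rw [Multiset.count_pos, ← Multiset.mem_toFinset]
      exact (Finset.mem_sdiff.1 hx).1
    _ = Multiset.card rd + 1 := by
      rw [← add_assoc, ← Finset.sum_union Finset.disjoint_sdiff, Finset.union_sdiff_self_eq_union,
        ← Multiset.toFinset_sum_count_eq, ← Finset.sum_subset Finset.subset_union_right]
      intro x _ hx₂
      simpa only [Multiset.mem_toFinset, Multiset.count_eq_zero] using hx₂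


lemma parity_roots (a b : ℝ) (hab : a < b) :
    ∀ n : ℕ, ∀ p : ℝ[X], (p.roots.filter fun y => a < y ∧ y < b).card = n →
      p.eval a ≠ 0 → p.eval b ≠ 0 →
      (Even n ↔ 0 < p.eval a * p.eval b) := by
  intro n
  induction n using Nat.strong_induction_on with
  | _ n ih =>
    intro p hcard hpa hpb
    have hp : p ≠ 0 := fun h => hpa (by simp [h])
    by_cases hroot : ∃ r, a < r ∧ r < b ∧ p.eval r = 0
    · obtain ⟨r, har, hrb, hr0⟩ := hroot
      obtain ⟨q, hq⟩ := (dvd_iff_isRoot).2 hr0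
      have hq0 : q ≠ 0 := fun h => hp (by simp [hq, h])
      have hXr : (X - C r) ≠ (0 : ℝ[X]) := X_sub_C_ne_zero r
      have hroots : p.roots = r ::ₘ q.roots := by
        rw [hq, roots_mul (hq ▸ hp), roots_X_sub_C]
        simp
      have hfilter : (p.roots.filter fun y => a < y ∧ y < b).card
          = (q.roots.filter fun y => a < y ∧ y < b).card + 1 := by
        rw [hroots, Multiset.filter_cons, if_pos ⟨har, hrb⟩]
        simp [add_comm]
      have hqa : q.eval a ≠ 0 := fun h => hpa (by simp [hq, h])
      have hqb : q.eval b ≠ 0 := fun h => hpb (by simp [hq, h])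
      have hn : n = (q.roots.filter fun y => a < y ∧ y < b).card + 1 := by
        rw [← hcard, hfilter]
      have ihq := ih (q.roots.filter fun y => a < y ∧ y < b).card
        (by omega) q rfl hqa hqb
      have hpa' : p.eval a = (a - r) * q.eval a := by simp [hq]
      have hpb' : p.eval b = (b - r) * q.eval b := by simp [hq]
      have har' : a - r < 0 := by linarith
      have hbr' : 0 < b - r := by linarith
      constructor
      · intro he
        have : ¬ Even ((q.roots.filter fun y => a < y ∧ y < b).card) := by
          rw [hn] at he; simpa [Nat.even_add_one] using he
        have hq2 : ¬ (0 < q.eval a * q.eval b) := fun h => this (ihq.2 h)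
        have hq3 : q.eval a * q.eval b < 0 := by
          rcases lt_trichotomy (q.eval a * q.eval b) 0 with h|h|h
          · exact h
          · exact absurd h (mul_ne_zero hqa hqb)
          · exact absurd h hq2
        rw [hpa', hpb']
        have h4 : 0 < ((a - r) * (b - r)) * (q.eval a * q.eval b) :=
          mul_pos_of_neg_of_neg (mul_neg_of_neg_of_pos har' hbr') hq3
        nlinarith [h4]
      · intro hpos
        rw [hpa', hpb'] at hpos
        have hq3 : q.eval a * q.eval b < 0 := by
          rcases lt_trichotomy (q.eval a * q.eval b) 0 with h|h|h
          · exact h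
          · exact absurd h (mul_ne_zero hqa hqb)
          · exfalso
            have h4 : ((a - r) * (b - r)) * (q.eval a * q.eval b) < 0 :=
              mul_neg_of_neg_of_pos (mul_neg_of_neg_of_pos har' hbr') h
            nlinarith [h4]
        have : ¬ Even ((q.roots.filter fun y => a < y ∧ y < b).card) := by
          intro he
          have h5 := ihq.1 he
          have h4 : ((a - r) * (b - r)) * (q.eval a * q.eval b) < 0 :=
            mul_neg_of_neg_of_pos (mul_neg_of_neg_of_pos har' hbr') h5
          nlinarith [h4]
        rw [hn]
        simpa [Nat.even_add_one] using this
    · -- no roots in (a,b): card = 0 and same sign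
      have h0 : (p.roots.filter fun y => a < y ∧ y < b).card = 0 := by
        rw [Multiset.card_eq_zero, Multiset.filter_eq_nil]
        intro y hy hyab
        exact hroot ⟨y, hyab.1, hyab.2, (mem_roots hp).1 hy⟩
      have hn0 : n = 0 := by omega
      subst hn0
      simp only [Even.zero, true_iff]
      rcases lt_trichotomy (p.eval a * p.eval b) 0 with h|h|h
      · exfalso
        rcases lt_trichotomy (p.eval a) 0 with ha|ha|ha
        · have hb : 0 < p.eval b := by nlinarith
          obtain ⟨z, hz, hz0⟩ := intermediate_value_Ioo hab.le
            (p.continuousOn (s := Set.Icc a b)) (Set.mem_Ioo.2 ⟨ha, hb⟩)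
          exact hroot ⟨z, hz.1, hz.2, hz0⟩
        · exact hpa ha
        · have hb : p.eval b < 0 := by nlinarith
          obtain ⟨z, hz, hz0⟩ := intermediate_value_Ioo' hab.le
            (p.continuousOn (s := Set.Icc a b)) (Set.mem_Ioo.2 ⟨hb, ha⟩)
          exact hroot ⟨z, hz.1, hz.2, hz0⟩
      · exact absurd h (mul_ne_zero hpa hpb)
      · exact h

end aux

noncomputable def QQ (kp km : ℝ) (ap am : ℕ) : ℝ[X] :=
  C (ap : ℝ) * (C (ap : ℝ) - 1) * (C km - X) ^ 2
    - 2 * C (ap : ℝ) * C (am : ℝ) * ((X + C kp) * (C km - X))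
    + C (am : ℝ) * (C (am : ℝ) - 1) * (X + C kp) ^ 2

lemma hh_first (kp km : ℝ) (ap am : ℕ) (hap : 1 ≤ ap) (ham : 1 ≤ am) :
    (X + C kp) * (C km - X) * derivative ((X + C kp) ^ ap * (C km - X) ^ am) =
      (X + C kp) ^ ap * (C km - X) ^ am *
        (C (ap : ℝ) * (C km - X) - C (am : ℝ) * (X + C kp)) := by
  obtain ⟨m, rfl⟩ : ∃ m, ap = m + 1 := ⟨ap - 1, by omega⟩
  obtain ⟨n, rfl⟩ : ∃ n, am = n + 1 := ⟨am - 1, by omega⟩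
  simp only [derivative_mul, derivative_pow, derivative_add, derivative_X, derivative_C,
    derivative_sub, Nat.add_sub_cancel, Nat.cast_add, Nat.cast_one, C_add, C_1]
  push_cast
  ring

lemma hh_second (kp km : ℝ) (ap am : ℕ) (hap : 1 ≤ ap) (ham : 1 ≤ am) :
    (X + C kp) ^ 2 * (C km - X) ^ 2 *
        derivative (derivative ((X + C kp) ^ ap * (C km - X) ^ am)) =
      (X + C kp) ^ ap * (C km - X) ^ am * QQ kp km ap am := by
  have h1 := hh_first kp km ap am hap ham
  set H : ℝ[X] := (X + C kp) ^ ap * (C km - X) ^ am with hH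
  set H' : ℝ[X] := derivative H with hH'
  have d1 := congrArg derivative h1
  simp only [derivative_mul, derivative_add, derivative_sub, derivative_X, derivative_C,
    derivative_one] at d1
  simp only [QQ]
  linear_combination ((X + C kp) * (C km - X)) * d1 +
    ((C (ap : ℝ) * (C km - X) - C (am : ℝ) * (X + C kp)) - (C km - X) + (X + C kp)) * h1




lemma QQ_natDegree (kp km : ℝ) (ap am : ℕ) : (QQ kp km ap am).natDegree ≤ 2 := by
  unfold QQ
  compute_degree

lemma QQ_ne_zero (kp km : ℝ) (hkp : 0 < kp) (hkm : 0 < km) (ap am : ℕ) (hap : 2 ≤ ap) :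
    QQ kp km ap am ≠ 0 := by
  intro h
  have h2 : (QQ kp km ap am).eval (-kp) = (ap : ℝ) * ((ap : ℝ) - 1) * (km + kp) ^ 2 := by
    simp [QQ]
  rw [h] at h2
  simp only [eval_zero] at h2
  have hap' : (2 : ℝ) ≤ (ap : ℝ) := by exact_mod_cast hap
  have h3 : (0:ℝ) < (km + kp) ^ 2 := by nlinarith [mul_pos (by linarith : (0:ℝ) < km + kp) (by linarith : (0:ℝ) < km + kp)]
  have hpos : (0 : ℝ) < (ap : ℝ) * ((ap : ℝ) - 1) * (km + kp) ^ 2 := by nlinarith [mul_pos (by nlinarith : (0:ℝ) < (ap:ℝ) * ((ap:ℝ) - 1)) h3]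
  linarith [h2 ▸ hpos]

lemma hpoly_ne_zero (kp km : ℝ) (hkp : 0 < kp) (hkm : 0 < km) (ap am : ℕ) :
    ((X + C kp) ^ ap * (C km - X) ^ am : ℝ[X]) ≠ 0 := by
  have h1 : (X + C kp : ℝ[X]) ≠ 0 := X_add_C_ne_zero kp
  have h2 : (C km - X : ℝ[X]) ≠ 0 := by
    intro h
    have := congrArg (fun p => Polynomial.coeff p 1) h
    simp at this
  exact mul_ne_zero (pow_ne_zero _ h1) (pow_ne_zero _ h2)

lemma hh2_roots_bound (kp km : ℝ) (hkp : 0 < kp) (hkm : 0 < km) (ap am : ℕ)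
    (hap : 2 ≤ ap) (ham : 1 ≤ am) :
    Multiset.card (((derivative (derivative ((X + C kp) ^ ap * (C km - X) ^ am))).roots.filter
      (fun y => 0 < y ∧ y < km))) ≤ 2 := by
  classical
  set H2 := derivative (derivative ((X + C kp) ^ ap * (C km - X) ^ am : ℝ[X])) with hH2
  have hid := hh_second kp km ap am (by omega) ham
  have hQ := QQ_ne_zero kp km hkp hkm ap am hap
  have hh := hpoly_ne_zero kp km hkp hkm ap am
  have hrhs : ((X + C kp) ^ ap * (C km - X) ^ am) * QQ kp km ap am ≠ 0 := mul_ne_zero hh hQ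
  have hlhs : (X + C kp) ^ 2 * (C km - X) ^ 2 * H2 ≠ 0 := by rw [← hH2] at hid; rw [hid]; exact hrhs
  have hH2ne : H2 ≠ 0 := by
    intro h; rw [h, mul_zero] at hlhs; exact hlhs rfl
  have hmult : ∀ y : ℝ, 0 < y → y < km →
      rootMultiplicity y H2 = rootMultiplicity y (QQ kp km ap am) := by
    intro y hy1 hy2
    have hyp : (y + kp) ≠ 0 := by positivity
    have hym : (km - y) ≠ 0 := by intro h; linarith [(sub_eq_zero.1 h)]
    have e1 : rootMultiplicity y ((X + C kp) ^ 2 * (C km - X) ^ 2 * H2)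
        = rootMultiplicity y (((X + C kp) ^ ap * (C km - X) ^ am) * QQ kp km ap am) := by
      rw [← hH2] at hid; rw [hid]
    rw [rootMultiplicity_mul hlhs, rootMultiplicity_mul hrhs] at e1
    have z1 : rootMultiplicity y ((X + C kp) ^ 2 * (C km - X) ^ 2 : ℝ[X]) = 0 := by
      apply rootMultiplicity_eq_zero
      simp only [IsRoot, eval_mul, eval_pow, eval_add, eval_sub, eval_X, eval_C]
      exact mul_ne_zero (pow_ne_zero _ hyp) (pow_ne_zero _ hym)
    have z2 : rootMultiplicity y ((X + C kp) ^ ap * (C km - X) ^ am : ℝ[X]) = 0 := by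
      apply rootMultiplicity_eq_zero
      simp only [IsRoot, eval_mul, eval_pow, eval_add, eval_sub, eval_X, eval_C]
      exact mul_ne_zero (pow_ne_zero _ hyp) (pow_ne_zero _ hym)
    omega
  have hle : (H2.roots.filter (fun y => 0 < y ∧ y < km)) ≤ (QQ kp km ap am).roots := by
    rw [Multiset.le_iff_count]
    intro z
    rw [Multiset.count_filter]
    split
    · next hz =>
      rw [count_roots, count_roots, hmult z hz.1 hz.2]
    · exact Nat.zero_le _
  calc Multiset.card (H2.roots.filter (fun y => 0 < y ∧ y < km))
      ≤ Multiset.card (QQ kp km ap am).roots := Multiset.card_le_card hle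
    _ ≤ (QQ kp km ap am).natDegree := (QQ kp km ap am).card_roots'
    _ ≤ 2 := QQ_natDegree kp km ap am









lemma main_univ (ap am : ℕ) (hap : 2 ≤ ap) (ham : 1 ≤ am) (kp km κ : ℝ)
    (hkp : 0 < kp) (hkm : 0 < km) (hκ : 0 < κ) (h2k : 2 * kp < km)
    (hlo : 2 ^ ap * kp ^ (ap - 1) * (km - kp) ^ am < κ)
    (hhi : κ < 3 ^ ap / 2 * kp ^ (ap - 1) * (km - 2 * kp) ^ am) :
    threeSimpleRoots (gNine ap am kp km κ) km := by
  classical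
  set g : ℝ[X] := gNine ap am kp km κ with hg
  have geval : ∀ y : ℝ, g.eval y = (y + kp) ^ ap * (km - y) ^ am - κ * y := by
    intro y; simp [hg, gNine]
  have epow : kp ^ (ap - 1) * kp = kp ^ ap := by
    rw [← pow_succ]; congr 1; omega
  -- signs
  have e0 : g.eval 0 = kp ^ ap * km ^ am := by simp [geval]
  have g0 : 0 < g.eval 0 := by rw [e0]; positivity
  have ekp : g.eval kp = 2 ^ ap * kp ^ ap * (km - kp) ^ am - κ * kp := by
    rw [geval, show kp + kp = 2 * kp by ring, mul_pow]
  have gkp : g.eval kp < 0 := by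
    rw [ekp]
    have h1 := mul_lt_mul_of_pos_right hlo hkp
    have e2 : 2 ^ ap * kp ^ (ap - 1) * (km - kp) ^ am * kp
        = 2 ^ ap * kp ^ ap * (km - kp) ^ am := by rw [← epow]; ring
    nlinarith [h1, e2]
  have e2kp : g.eval (2 * kp) = 3 ^ ap * kp ^ ap * (km - 2 * kp) ^ am - κ * (2 * kp) := by
    rw [geval, show 2 * kp + kp = 3 * kp by ring, mul_pow]
  have g2kp : 0 < g.eval (2 * kp) := by
    rw [e2kp]
    have h1 := mul_lt_mul_of_pos_right hhi (by positivity : (0:ℝ) < 2 * kp)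
    have e2 : 3 ^ ap / 2 * kp ^ (ap - 1) * (km - 2 * kp) ^ am * (2 * kp)
        = 3 ^ ap * kp ^ ap * (km - 2 * kp) ^ am := by rw [← epow]; ring
    nlinarith [h1, e2]
  have ekm : g.eval km = -(κ * km) := by
    rw [geval, sub_self, zero_pow (by omega : am ≠ 0)]; ring
  have gkm : g.eval km < 0 := by rw [ekm]; nlinarith
  have gne : g ≠ 0 := by
    intro h; rw [h] at g0; simp at g0
  -- IVT roots
  have hcont : ∀ s : Set ℝ, ContinuousOn (fun y => g.eval y) s := fun s => g.continuousOn
  obtain ⟨r1, hr1, hr1z⟩ := intermediate_value_Ioo' (by linarith : (0:ℝ) ≤ kp)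
    (hcont _) (Set.mem_Ioo.2 ⟨gkp, g0⟩)
  obtain ⟨r2, hr2, hr2z⟩ := intermediate_value_Ioo (by linarith : kp ≤ 2 * kp)
    (hcont _) (Set.mem_Ioo.2 ⟨gkp, g2kp⟩)
  obtain ⟨r3, hr3, hr3z⟩ := intermediate_value_Ioo' (by linarith : 2 * kp ≤ km)
    (hcont _) (Set.mem_Ioo.2 ⟨gkm, g2kp⟩)
  obtain ⟨hr1a, hr1b⟩ := Set.mem_Ioo.1 hr1
  obtain ⟨hr2a, hr2b⟩ := Set.mem_Ioo.1 hr2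
  obtain ⟨hr3a, hr3b⟩ := Set.mem_Ioo.1 hr3
  have hmem : ∀ r : ℝ, 0 < r → r < km → g.eval r = 0 →
      r ∈ (g.roots.filter (fun y => 0 < y ∧ y < km)) := by
    intro r h1 h2 h3
    rw [Multiset.mem_filter]
    exact ⟨(mem_roots gne).2 h3, h1, h2⟩
  have hm1 := hmem r1 hr1a (by linarith) hr1z
  have hm2 := hmem r2 (by linarith) (by linarith) hr2z
  have hm3 := hmem r3 (by linarith) hr3b hr3z
  have ne12 : r1 ≠ r2 := ne_of_lt (by linarith)
  have ne13 : r1 ≠ r3 := ne_of_lt (by linarith)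
  have ne23 : r2 ≠ r3 := ne_of_lt (by linarith)
  -- lower bound on count
  set M := Multiset.card (g.roots.filter (fun y => 0 < y ∧ y < km)) with hM
  have hsub : ({r1, r2, r3} : Finset ℝ) ⊆ (g.roots.filter (fun y => 0 < y ∧ y < km)).toFinset := by
    intro z hz
    simp only [Finset.mem_insert, Finset.mem_singleton] at hz
    rcases hz with rfl | rfl | rfl <;> exact Multiset.mem_toFinset.2 (by assumption)
  have hc3 : ({r1, r2, r3} : Finset ℝ).card = 3 := by
    rw [Finset.card_insert_of_notMem (by simp [ne12, ne13]),
      Finset.card_insert_of_notMem (by simp [ne23]), Finset.card_singleton]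
  have hMge : 3 ≤ M := by
    calc (3:ℕ) = ({r1, r2, r3} : Finset ℝ).card := hc3.symm
      _ ≤ (g.roots.filter (fun y => 0 < y ∧ y < km)).toFinset.card := Finset.card_le_card hsub
      _ ≤ M := Multiset.toFinset_card_le _
  -- upper bound
  have d1 : derivative g = derivative ((X + C kp) ^ ap * (C km - X) ^ am) - C κ := by
    simp [hg, gNine]
  have d2 : derivative (derivative g)
      = derivative (derivative ((X + C kp) ^ ap * (C km - X) ^ am)) := by
    rw [d1]; simp
  have hMle : M ≤ 4 := by
    have u1 := card_interval_rolle g 0 km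
    have u2 := card_interval_rolle (derivative g) 0 km
    rw [d2] at u2
    have u3 := hh2_roots_bound kp km hkp hkm ap am hap ham
    omega
  -- parity
  have hpar := parity_roots 0 km (by linarith) M g rfl (by exact g0.ne') gkm.ne
  have hodd : ¬ Even M := by
    intro he
    have := hpar.1 he
    nlinarith
  have hM3 : M = 3 := by
    rcases Nat.even_or_odd M with h | h
    · exact absurd h hodd
    · have := Nat.odd_iff.1 h; omega
  refine ⟨hM3, ?_⟩
  -- simplicity
  intro y hy0 hykm hyroot
  have hcy : Multiset.count y (g.roots.filter (fun y => 0 < y ∧ y < km))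
      = rootMultiplicity y g := by
    rw [Multiset.count_filter, if_pos ⟨hy0, hykm⟩, count_roots]
  have h1le : 1 ≤ rootMultiplicity y g := (rootMultiplicity_pos gne).2 hyroot
  by_contra hne
  have hge2 : 2 ≤ rootMultiplicity y g := by omega
  obtain ⟨s, t, hst, hsy, hty, hs, ht⟩ : ∃ s t : ℝ, s ≠ t ∧ s ≠ y ∧ t ≠ y ∧
      s ∈ (g.roots.filter (fun y => 0 < y ∧ y < km)) ∧
      t ∈ (g.roots.filter (fun y => 0 < y ∧ y < km)) := by
    by_cases h1 : y = r1
    · subst h1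
      exact ⟨r2, r3, ne23, fun h => ne12 h.symm, fun h => ne13 h.symm, hm2, hm3⟩
    · by_cases h2 : y = r2
      · subst h2
        exact ⟨r1, r3, ne13, fun h => ne12 h, fun h => ne23 h.symm, hm1, hm3⟩
      · exact ⟨r1, r2, ne12, fun h => h1 h.symm, fun h => h2 h.symm, hm1, hm2⟩
  have hsubset2 : ({y, s, t} : Finset ℝ) ⊆ (g.roots.filter (fun y => 0 < y ∧ y < km)).toFinset := by
    intro z hz
    simp only [Finset.mem_insert, Finset.mem_singleton] at hz
    rcases hz with rfl | rfl | rfl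
    · exact Multiset.mem_toFinset.2 (hmem z hy0 hykm hyroot)
    · exact Multiset.mem_toFinset.2 hs
    · exact Multiset.mem_toFinset.2 ht
  have hsum : (∑ x ∈ ({y, s, t} : Finset ℝ),
      Multiset.count x (g.roots.filter (fun y => 0 < y ∧ y < km))) ≤ 3 := by
    calc (∑ x ∈ ({y, s, t} : Finset ℝ),
        Multiset.count x (g.roots.filter (fun y => 0 < y ∧ y < km)))
        ≤ ∑ x ∈ (g.roots.filter (fun y => 0 < y ∧ y < km)).toFinset,
            Multiset.count x (g.roots.filter (fun y => 0 < y ∧ y < km)) := by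
          apply Finset.sum_le_sum_of_subset hsubset2
      _ = M := Multiset.toFinset_sum_count_eq _
      _ = 3 := hM3
  have hys : y ∉ ({s, t} : Finset ℝ) := by
    simp only [Finset.mem_insert, Finset.mem_singleton]
    push_neg
    exact ⟨fun h => hsy h.symm, fun h => hty h.symm⟩
  have hst' : s ∉ ({t} : Finset ℝ) := by simpa using hst
  rw [Finset.sum_insert hys, Finset.sum_insert hst', Finset.sum_singleton] at hsum
  have cs : 1 ≤ Multiset.count s (g.roots.filter (fun y => 0 < y ∧ y < km)) :=
    Multiset.one_le_count_iff_mem.2 hs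
  have ct : 1 ≤ Multiset.count t (g.roots.filter (fun y => 0 < y ∧ y < km)) :=
    Multiset.one_le_count_iff_mem.2 ht
  omega

lemma two_pow_lt_three_pow (ap : ℕ) (hap : 2 ≤ ap) : (2:ℝ) ^ (1 + ap) < 3 ^ ap := by
  induction ap with
  | zero => omega
  | succ n ih =>
    rcases Nat.lt_or_ge n 2 with h | h
    · interval_cases n
      · omega
      · norm_num
    · have := ih (by omega)
      rw [show 1 + (n+1) = (1+n) + 1 by ring, pow_succ, pow_succ]
      nlinarith [pow_pos (by norm_num : (0:ℝ) < 2) (1+n)]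

lemma exists_params (ap am : ℕ) (hap : 2 ≤ ap) (ham : 1 ≤ am) :
    ∃ km κ : ℝ, 0 < km ∧ 0 < κ ∧ 2 * 1 < km ∧
      (km - 1) / (km - 2 * 1) < ((3 : ℝ) ^ ap / 2 ^ (1 + ap)) ^ ((am : ℝ)⁻¹) ∧
      2 ^ ap * 1 ^ (ap - 1) * (km - 1) ^ am < κ ∧
      κ < 3 ^ ap / 2 * 1 ^ (ap - 1) * (km - 2 * 1) ^ am := by
  have hc0 : (0:ℝ) < (3 : ℝ) ^ ap / 2 ^ (1 + ap) := by positivity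
  have hc1 : (1:ℝ) < (3 : ℝ) ^ ap / 2 ^ (1 + ap) := by
    rw [lt_div_iff₀ (by positivity)]
    simpa using two_pow_lt_three_pow ap hap
  set c : ℝ := (3 : ℝ) ^ ap / 2 ^ (1 + ap) with hcdef
  set R : ℝ := c ^ ((am : ℝ)⁻¹) with hRdef
  have hinv : (0:ℝ) < (am : ℝ)⁻¹ := by
    have : (0:ℝ) < (am : ℝ) := by exact_mod_cast ham
    positivity
  have hR1 : 1 < R := by
    rw [hRdef]
    exact Real.one_lt_rpow_iff_of_pos hc0 |>.2 (Or.inl ⟨hc1, hinv⟩)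
  set km : ℝ := 3 + (R - 1)⁻¹ with hkmdef
  have hiR : 0 < (R - 1)⁻¹ := by
    have : 0 < R - 1 := by linarith
    positivity
  have hkm2 : (2:ℝ) < km := by rw [hkmdef]; linarith
  have hkm2' : (0:ℝ) < km - 2 := by linarith
  have hkm1 : (0:ℝ) < km - 1 := by linarith
  have hratio : (km - 1) / (km - 2) < R := by
    rw [div_lt_iff₀ hkm2']
    have hmul : (R - 1)⁻¹ * (R - 1) = 1 := inv_mul_cancel₀ (by linarith)
    rw [hkmdef]
    nlinarith [hmul, hR1, hiR]
  -- power comparison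
  have hram : ((km - 1) / (km - 2)) ^ am < c := by
    have h1 : ((km - 1) / (km - 2)) ^ am < R ^ am := by
      apply pow_lt_pow_left₀ hratio (by positivity) (by omega)
    have h2 : R ^ am = c := by
      rw [hRdef, ← Real.rpow_natCast (c ^ ((am:ℝ)⁻¹)) am, ← Real.rpow_mul hc0.le]
      rw [inv_mul_cancel₀ (Nat.cast_ne_zero.2 (by omega) : (am:ℝ) ≠ 0)]
      exact Real.rpow_one c
    rwa [h2] at h1
  have hkey : (2:ℝ) ^ ap * (km - 1) ^ am < 3 ^ ap / 2 * (km - 2) ^ am := by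
    rw [div_pow] at hram
    rw [div_lt_iff₀ (by positivity)] at hram
    have e1 : (2:ℝ) ^ ap * c = 3 ^ ap / 2 := by
      rw [hcdef, pow_add, pow_one]
      field_simp
    calc (2:ℝ) ^ ap * (km - 1) ^ am < 2 ^ ap * (c * (km - 2) ^ am) := by
          apply mul_lt_mul_of_pos_left hram (by positivity)
      _ = 3 ^ ap / 2 * (km - 2) ^ am := by rw [← mul_assoc, e1]
  refine ⟨km, (2 ^ ap * (km - 1) ^ am + 3 ^ ap / 2 * (km - 2) ^ am) / 2, by linarith, ?_, ?_, ?_, ?_, ?_⟩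
  · have : (0:ℝ) < 2 ^ ap * (km - 1) ^ am := by positivity
    linarith
  · linarith
  · rw [show (2:ℝ) * 1 = 2 by ring]
    exact hratio
  · simp only [one_pow, mul_one]
    linarith
  · simp only [one_pow, mul_one]
    norm_num
    linarith


theorem stmt9 (ap am : ℕ) (hap : 2 ≤ ap) (ham : 1 ≤ am) :
    (∃ kp km κ : ℝ, 0 < kp ∧ 0 < km ∧ 0 < κ ∧ 2 * kp < km ∧
      threeSimpleRoots (gNine ap am kp km κ) km) ∧
    (∀ kp km κ : ℝ, 0 < kp → 0 < km → 0 < κ → 2 * kp < km →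
      (km - kp) / (km - 2 * kp) < ((3 : ℝ) ^ ap / 2 ^ (1 + ap)) ^ ((am : ℝ)⁻¹) →
      2 ^ ap * kp ^ (ap - 1) * (km - kp) ^ am < κ →
      κ < 3 ^ ap / 2 * kp ^ (ap - 1) * (km - 2 * kp) ^ am →
      threeSimpleRoots (gNine ap am kp km κ) km) := by
  constructor
  · obtain ⟨km, κ, hkm, hκ, h2k, _hratio, hlo, hhi⟩ := exists_params ap am hap ham
    exact ⟨1, km, κ, one_pos, hkm, hκ, h2k,
      main_univ ap am hap ham 1 km κ one_pos hkm hκ h2k hlo hhi⟩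
  · intro kp km κ hkp hkm hκ h2k _hratio hlo hhi
    exact main_univ ap am hap ham kp km κ hkp hkm hκ h2k hlo hhi
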